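/- The pullback of the round metric on S^3 under the map Φ(x,y,z) = (e^{i√2 x} sin(z+π/4), e^{i√2 y} cos(z+π/4)) equals the Euclidean metric plus (sin 2z)(dx² − dy²); equivalently, for all (x,y,z), the matrix of Φ*g_S in coordinates (x,y,z) is diag(1+sin 2z, 1−sin 2z, 1). -/

import Mathlib

open Real

/-- The map `Φ(x,y,z) = (e^{i√2 x} sin(z+π/4), e^{i√2 y} cos(z+π/4))` into `ℂ²`. -/
noncomputable def PhiMap : ℝ × ℝ × ℝ → ℂ × ℂ := fun p =>
  (Complex.exp (Complex.I * (Real.sqrt 2 * p.1)) * (Real.sin (p.2.2 + π / 4) : ℂ),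
   Complex.exp (Complex.I * (Real.sqrt 2 * p.2.1)) * (Real.cos (p.2.2 + π / 4) : ℂ))

/-- The real (round) inner product on `ℂ² ≅ ℝ⁴`. -/
noncomputable def realInnerC2 (a b : ℂ × ℂ) : ℝ :=
  ((starRingEnd ℂ) a.1 * b.1).re + ((starRingEnd ℂ) a.2 * b.2).re

lemma fderiv_phi_apply (x y z : ℝ) (v : ℝ × ℝ × ℝ) :
    fderiv ℝ PhiMap (x, y, z) v =
      (Complex.exp (Complex.I * (Real.sqrt 2 * x)) *
        (Complex.I * (Real.sqrt 2 : ℝ) * (v.1 : ℝ) * (Real.sin (z + π / 4) : ℂ)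
          + (Real.cos (z + π / 4) : ℂ) * (v.2.2 : ℝ)),
       Complex.exp (Complex.I * (Real.sqrt 2 * y)) *
        (Complex.I * (Real.sqrt 2 : ℝ) * (v.2.1 : ℝ) * (Real.cos (z + π / 4) : ℂ)
          - (Real.sin (z + π / 4) : ℂ) * (v.2.2 : ℝ))) := by
  have hP1 : HasFDerivAt (fun p : ℝ × ℝ × ℝ => p.1) (ContinuousLinearMap.fst ℝ ℝ (ℝ × ℝ)) (x,y,z) :=
    hasFDerivAt_fst
  have hP2 : HasFDerivAt (fun p : ℝ × ℝ × ℝ => p.2.1)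
      ((ContinuousLinearMap.fst ℝ ℝ ℝ).comp (ContinuousLinearMap.snd ℝ ℝ (ℝ × ℝ))) (x,y,z) :=
    hasFDerivAt_fst.comp _ hasFDerivAt_snd
  have hP3 : HasFDerivAt (fun p : ℝ × ℝ × ℝ => p.2.2)
      ((ContinuousLinearMap.snd ℝ ℝ ℝ).comp (ContinuousLinearMap.snd ℝ ℝ (ℝ × ℝ))) (x,y,z) :=
    hasFDerivAt_snd.comp _ hasFDerivAt_snd
  -- phase maps
  have hu1 : HasFDerivAt (fun p : ℝ × ℝ × ℝ => Complex.I * ((Real.sqrt 2 : ℂ) * (p.1 : ℂ)))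
      ((Complex.I * (Real.sqrt 2 : ℝ)) • (Complex.ofRealCLM.comp (ContinuousLinearMap.fst ℝ ℝ (ℝ × ℝ)))) (x,y,z) := by
    have := (Complex.ofRealCLM.hasFDerivAt (x := x)).comp (x,y,z) hP1
    have h2 := this.const_mul (Complex.I * (Real.sqrt 2 : ℝ))
    exact h2.congr_of_eventuallyEq (Filter.Eventually.of_forall fun p => by
      simp only [Function.comp_apply, Complex.ofRealCLM_apply]; ring)
  have hu2 : HasFDerivAt (fun p : ℝ × ℝ × ℝ => Complex.I * ((Real.sqrt 2 : ℂ) * (p.2.1 : ℂ)))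
      ((Complex.I * (Real.sqrt 2 : ℝ)) • (Complex.ofRealCLM.comp
        ((ContinuousLinearMap.fst ℝ ℝ ℝ).comp (ContinuousLinearMap.snd ℝ ℝ (ℝ × ℝ))))) (x,y,z) := by
    have := (Complex.ofRealCLM.hasFDerivAt (x := y)).comp (x,y,z) hP2
    have h2 := this.const_mul (Complex.I * (Real.sqrt 2 : ℝ))
    exact h2.congr_of_eventuallyEq (Filter.Eventually.of_forall fun p => by
      simp only [Function.comp_apply, Complex.ofRealCLM_apply]; ring)
  -- exponentials
  have hE1 := ((Complex.hasDerivAt_exp (Complex.I * ((Real.sqrt 2 : ℂ) * (x : ℂ)))).hasFDerivAt.restrictScalars ℝ).comp (x,y,z) hu1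
  have hE2 := ((Complex.hasDerivAt_exp (Complex.I * ((Real.sqrt 2 : ℂ) * (y : ℂ)))).hasFDerivAt.restrictScalars ℝ).comp (x,y,z) hu2
  -- z + π/4
  have hZ : HasFDerivAt (fun p : ℝ × ℝ × ℝ => p.2.2 + π/4)
      ((ContinuousLinearMap.snd ℝ ℝ ℝ).comp (ContinuousLinearMap.snd ℝ ℝ (ℝ × ℝ))) (x,y,z) :=
    hP3.add_const _
  have hS : HasFDerivAt (fun p : ℝ × ℝ × ℝ => ((Real.sin (p.2.2 + π/4) : ℝ) : ℂ)) _ (x,y,z) :=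
    (Complex.ofRealCLM.hasFDerivAt).comp (x,y,z)
      (by exact (Real.hasDerivAt_sin (z + π/4)).comp_hasFDerivAt (x,y,z) hZ)
  have hC : HasFDerivAt (fun p : ℝ × ℝ × ℝ => ((Real.cos (p.2.2 + π/4) : ℝ) : ℂ)) _ (x,y,z) :=
    (Complex.ofRealCLM.hasFDerivAt).comp (x,y,z)
      (by exact (Real.hasDerivAt_cos (z + π/4)).comp_hasFDerivAt (x,y,z) hZ)
  have hPhi : HasFDerivAt PhiMap _ (x,y,z) := HasFDerivAt.prodMk (hE1.mul hS) (hE2.mul hC)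
  rw [hPhi.fderiv]
  simp only [ContinuousLinearMap.prod_apply, ContinuousLinearMap.add_apply,
    ContinuousLinearMap.smul_apply, ContinuousLinearMap.comp_apply,
    ContinuousLinearMap.coe_restrictScalars', ContinuousLinearMap.smulRight_apply,
    ContinuousLinearMap.toSpanSingleton_apply,
    ContinuousLinearMap.one_apply, ContinuousLinearMap.coe_fst',
    ContinuousLinearMap.coe_snd', Complex.ofRealCLM_apply, smul_eq_mul,
    Complex.real_smul, Complex.ofReal_mul, Complex.ofReal_neg]
  rw [Prod.mk.injEq]
  constructor <;> (simp only [Function.comp_apply]; ring)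

lemma conj_exp_I_mul (t : ℝ) :
    (starRingEnd ℂ) (Complex.exp (Complex.I * t)) * Complex.exp (Complex.I * t) = 1 := by
  rw [← Complex.exp_conj, ← Complex.exp_add]
  have : (starRingEnd ℂ) (Complex.I * t) + Complex.I * t = 0 := by
    simp [Complex.conj_I, Complex.conj_ofReal]
  rw [this, Complex.exp_zero]

lemma key (E : ℂ) (hE : (starRingEnd ℂ) E * E = 1) (a b d e : ℝ) :
    ((starRingEnd ℂ) (E * (Complex.I * a + b)) * (E * (Complex.I * d + e))).re
      = a * d + b * e := by
  have h : (starRingEnd ℂ) (E * (Complex.I * a + b)) * (E * (Complex.I * d + e))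
      = ((starRingEnd ℂ) E * E) * ((starRingEnd ℂ) (Complex.I * a + b) * (Complex.I * d + e)) := by
    rw [map_mul]; ring
  rw [h, hE, one_mul]
  simp [Complex.conj_I, Complex.conj_ofReal, Complex.mul_re, Complex.add_re, Complex.add_im,
    Complex.mul_im, Complex.I_re, Complex.I_im, Complex.ofReal_re, Complex.ofReal_im]
  ring

/-- The pullback of the round metric under `Φ` is
`dx² + dy² + dz² + (sin 2z)(dx² − dy²)`: its matrix in `(x,y,z)` coordinates is
`diag(1 + sin 2z, 1 − sin 2z, 1)`. -/
theorem pullback_round_metric (x y z : ℝ) (v w : ℝ × ℝ × ℝ) :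
    realInnerC2 (fderiv ℝ PhiMap (x, y, z) v) (fderiv ℝ PhiMap (x, y, z) w)
      = (v.1 * w.1 + v.2.1 * w.2.1 + v.2.2 * w.2.2)
        + Real.sin (2 * z) * (v.1 * w.1 - v.2.1 * w.2.1) := by
  rw [fderiv_phi_apply, fderiv_phi_apply]
  simp only [realInnerC2]
  have r1 : ∀ u : ℝ × ℝ × ℝ,
      Complex.exp (Complex.I * (Real.sqrt 2 * x)) *
        (Complex.I * (Real.sqrt 2 : ℝ) * (u.1 : ℝ) * (Real.sin (z + π / 4) : ℂ)
          + (Real.cos (z + π / 4) : ℂ) * (u.2.2 : ℝ))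
      = Complex.exp (Complex.I * (Real.sqrt 2 * x)) *
        (Complex.I * ((Real.sqrt 2 * u.1 * Real.sin (z + π / 4) : ℝ) : ℂ)
          + ((Real.cos (z + π / 4) * u.2.2 : ℝ) : ℂ)) := by
    intro u; push_cast; ring
  have r2 : ∀ u : ℝ × ℝ × ℝ,
      Complex.exp (Complex.I * (Real.sqrt 2 * y)) *
        (Complex.I * (Real.sqrt 2 : ℝ) * (u.2.1 : ℝ) * (Real.cos (z + π / 4) : ℂ)
          - (Real.sin (z + π / 4) : ℂ) * (u.2.2 : ℝ))
      = Complex.exp (Complex.I * (Real.sqrt 2 * y)) *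
        (Complex.I * ((Real.sqrt 2 * u.2.1 * Real.cos (z + π / 4) : ℝ) : ℂ)
          + ((-(Real.sin (z + π / 4) * u.2.2) : ℝ) : ℂ)) := by
    intro u; push_cast; ring
  have hEx := conj_exp_I_mul (Real.sqrt 2 * x)
  have hEy := conj_exp_I_mul (Real.sqrt 2 * y)
  push_cast at hEx hEy
  rw [r1 v, r1 w, r2 v, r2 w, key _ hEx, key _ hEy]
  have h2 : Real.sqrt 2 * Real.sqrt 2 = 2 := Real.mul_self_sqrt (by norm_num)
  have pyth := Real.sin_sq_add_cos_sq z
  have hs : Real.sin (z + π / 4) ^ 2 = 1 / 2 + Real.sin (2 * z) / 2 := by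
    rw [Real.sin_add, Real.cos_pi_div_four, Real.sin_pi_div_four, Real.sin_two_mul]
    linear_combination ((Real.sin z + Real.cos z) ^ 2 / 4) * h2 + (1 / 2) * pyth
  have hc : Real.cos (z + π / 4) ^ 2 = 1 / 2 - Real.sin (2 * z) / 2 := by
    linear_combination Real.sin_sq_add_cos_sq (z + π / 4) - hs
  linear_combination (v.1 * w.1 * Real.sin (z + π / 4) ^ 2
      + v.2.1 * w.2.1 * Real.cos (z + π / 4) ^ 2) * h2
    + v.2.2 * w.2.2 * Real.sin_sq_add_cos_sq (z + π / 4)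
    + (2 * v.1 * w.1) * hs + (2 * v.2.1 * w.2.1) * hc
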